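/- arXiv:2408.14308 — 5 statements merged into one kernel-verified Lean document; each statement's English description precedes it below -/
import Mathlib

section
/- If f : ℝⁿ → (-∞,∞] is lower semicontinuous with bounded effective domain and has a unique minimizer x*, then the lower convex envelope f̆ of f also has x* as its unique minimizer. -/
open scoped BigOperators
open Classical

noncomputable section

/-- Convexity for extended-real-valued functions (codomain `(-∞, ∞]` modeled by `EReal`). -/
def ConvexE {X : Type*} [AddCommGroup X] [Module ℝ X] (f : X → EReal) : Prop :=
  ∀ x y : X, ∀ a b : ℝ, 0 ≤ a → 0 ≤ b → a + b = 1 →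
    f (a • x + b • y) ≤ (a : EReal) * f x + (b : EReal) * f y

/-- `f` is convex at `x`: every finite convex combination of points of `dom f`
representing `x` gives value at least `f x`. -/
def IsConvexAt {X : Type*} [AddCommGroup X] [Module ℝ X] (f : X → EReal) (x : X) : Prop :=
  ∀ (m : ℕ) (w : Fin m → ℝ) (p : Fin m → X),
    (∀ k, 0 ≤ w k) → (∑ k, w k) = 1 → (∀ k, f (p k) ≠ ⊤) →
    (∑ k, w k • p k) = x → f x ≤ ∑ k, (w k : EReal) * f (p k)

/-- The lower convex envelope: pointwise supremum of all convex minorants. -/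
def lce {X : Type*} [AddCommGroup X] [Module ℝ X] (f : X → EReal) : X → EReal :=
  fun x => sSup {y | ∃ h : X → EReal, ConvexE h ∧ (∀ z, h z ≤ f z) ∧ h x = y}

/-- The explicit formula: infimum of `∑ λₖ f xₖ` over all finite convex combinations
of points of `dom f` representing `x` (infimum of the empty set is `∞`). -/
def lceFormula {X : Type*} [AddCommGroup X] [Module ℝ X] (f : X → EReal) : X → EReal :=
  fun x => sInf {r | ∃ (m : ℕ) (w : Fin m → ℝ) (p : Fin m → X),
    (∀ k, 0 ≤ w k) ∧ (∑ k, w k) = 1 ∧ (∀ k, f (p k) ≠ ⊤) ∧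
    (∑ k, w k • p k) = x ∧ (∑ k, (w k : EReal) * f (p k)) = r}

/-- Auxiliary real inequality: convexity of `z ↦ r + c * max z 0` along a segment. -/
lemma aux_convex_real (r c s1 s2 a b : ℝ) (hc : 0 ≤ c) (ha : 0 ≤ a) (hb : 0 ≤ b)
    (hab : a + b = 1) :
    r + c * max (a * s1 + b * s2) 0 ≤ a * (r + c * max s1 0) + b * (r + c * max s2 0) := by
  have hmax : max (a * s1 + b * s2) 0 ≤ a * max s1 0 + b * max s2 0 := by
    apply max_le
    · have h1 : s1 ≤ max s1 0 := le_max_left _ _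
      have h2 : s2 ≤ max s2 0 := le_max_left _ _
      nlinarith
    · positivity
  have h1 : c * max (a * s1 + b * s2) 0 ≤ c * (a * max s1 0 + b * max s2 0) :=
    mul_le_mul_of_nonneg_left hmax hc
  calc r + c * max (a * s1 + b * s2) 0 ≤ r + c * (a * max s1 0 + b * max s2 0) := by linarith
    _ = a * (r + c * max s1 0) + b * (r + c * max s2 0) := by linear_combination (-r) * hab

theorem stmt_3 {n : ℕ} (f : EuclideanSpace ℝ (Fin n) → EReal)
    (hbot : ∀ x, f x ≠ ⊥) (hlsc : LowerSemicontinuous f)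
    (hbdd : Bornology.IsBounded {x | f x ≠ ⊤})
    (xs : EuclideanSpace ℝ (Fin n)) (hproper : f xs ≠ ⊤)
    (hmin : ∀ x, x ≠ xs → f xs < f x) :
    ∀ x, x ≠ xs → lce f xs < lce f x := by
  intro x hx
  set r : ℝ := (f xs).toReal with hr_def
  have hr : (r : EReal) = f xs := EReal.coe_toReal hproper (hbot xs)
  have hfxs_le : ∀ z, (r : EReal) ≤ f z := by
    intro z
    rcases eq_or_ne z xs with hz | hz
    · rw [hz, hr]
    · rw [hr]; exact (hmin z hz).le
  set u : EuclideanSpace ℝ (Fin n) := x - xs with hu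
  have hu0 : u ≠ 0 := sub_ne_zero.mpr hx
  have hnu : 0 < ‖u‖ := norm_pos_iff.mpr hu0
  set t0 : ℝ := ‖u‖ ^ 2 / 2 with ht0_def
  have ht0 : 0 < t0 := by positivity
  -- Step A: uniform separation on the half-space
  have key : ∃ δ : ℝ, 0 < δ ∧
      ∀ z, t0 ≤ (inner ℝ u (z - xs) : ℝ) → ((r + δ : ℝ) : EReal) ≤ f z := by
    by_contra hcon
    push_neg at hcon
    set t : ℕ → Set (EuclideanSpace ℝ (Fin n)) := fun i =>
      {z | t0 ≤ (inner ℝ u (z - xs) : ℝ) ∧ f z ≤ ((r + 1 / (i + 1) : ℝ) : EReal)} with ht_def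
    have htn : ∀ i, (t i).Nonempty := by
      intro i
      obtain ⟨z, hz1, hz2⟩ := hcon (1 / (i + 1)) (by positivity)
      exact ⟨z, hz1, hz2.le⟩
    have htcl : ∀ i, IsClosed (t i) := by
      intro i
      have hci : Continuous fun z : EuclideanSpace ℝ (Fin n) => (inner ℝ u (z - xs) : ℝ) :=
        continuous_const.inner (continuous_id.sub continuous_const)
      exact (isClosed_le continuous_const hci).inter (hlsc.isClosed_preimage _)
    have htd : ∀ i, t (i + 1) ⊆ t i := by
      intro i z hz
      refine ⟨hz.1, le_trans hz.2 ?_⟩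
      rw [EReal.coe_le_coe_iff]
      have : (1 : ℝ) / (↑(i + 1) + 1) ≤ 1 / (↑i + 1) := by
        apply one_div_le_one_div_of_le
        · positivity
        · push_cast; linarith
      linarith
    have ht0c : IsCompact (t 0) := by
      apply Metric.isCompact_of_isClosed_isBounded (htcl 0)
      apply hbdd.subset
      intro z hz
      have := hz.2
      intro htop
      rw [htop] at this
      exact (EReal.coe_lt_top _).not_ge this
    obtain ⟨z, hz⟩ :=
      IsCompact.nonempty_iInter_of_sequence_nonempty_isCompact_isClosed t htd htn ht0c htcl
    simp only [Set.mem_iInter] at hz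
    have hz1 : t0 ≤ (inner ℝ u (z - xs) : ℝ) := (hz 0).1
    have hztop : f z ≠ ⊤ := by
      intro htop
      have := (hz 0).2
      rw [htop] at this
      exact (EReal.coe_lt_top _).not_ge this
    have hzr : f z = ((f z).toReal : EReal) := (EReal.coe_toReal hztop (hbot z)).symm
    set s : ℝ := (f z).toReal with hs_def
    have hsr : s ≤ r := by
      apply le_of_forall_pos_le_add
      intro ε hε
      obtain ⟨i, hi⟩ := exists_nat_one_div_lt hε
      have := (hz i).2
      rw [hzr, EReal.coe_le_coe_iff] at this
      linarith
    have hzxs : z ≠ xs := by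
      intro hzeq
      rw [hzeq] at hz1
      simp at hz1
      linarith
    have := hmin z hzxs
    rw [← hr, hzr, EReal.coe_lt_coe_iff] at this
    linarith
  obtain ⟨δ, hδ, hsep⟩ := key
  -- Step B: bound on the domain
  obtain ⟨ρ, hρ⟩ := hbdd.subset_closedBall xs
  set R : ℝ := max 1 (‖u‖ * ρ) with hR_def
  have hR0 : 0 < R := lt_of_lt_of_le one_pos (le_max_left _ _)
  have hRb : ∀ z, f z ≠ ⊤ → (inner ℝ u (z - xs) : ℝ) ≤ R := by
    intro z hz
    have h1 : (inner ℝ u (z - xs) : ℝ) ≤ ‖u‖ * ‖z - xs‖ := real_inner_le_norm u _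
    have h2 : ‖z - xs‖ ≤ ρ := by
      have := hρ hz
      rwa [Metric.mem_closedBall, dist_eq_norm] at this
    have h3 : ‖u‖ * ‖z - xs‖ ≤ ‖u‖ * ρ := mul_le_mul_of_nonneg_left h2 (norm_nonneg _)
    exact le_trans h1 (le_trans h3 (le_max_right _ _))
  -- Step C: the convex minorant
  set c : ℝ := δ / R with hc_def
  have hc0 : 0 < c := div_pos hδ hR0
  set g : EuclideanSpace ℝ (Fin n) → ℝ :=
    fun z => r + c * max ((inner ℝ u (z - xs) : ℝ) - t0) 0 with hg_def
  set h : EuclideanSpace ℝ (Fin n) → EReal := fun z => ((g z : ℝ) : EReal) with hh_def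
  have hconv : ConvexE h := by
    intro x' y' a b ha hb hab
    have hsplit : a • x' + b • y' - xs = a • (x' - xs) + b • (y' - xs) := by
      linear_combination (norm := module) hab • xs
    have hinner : (inner ℝ u (a • x' + b • y' - xs) : ℝ) =
        a * (inner ℝ u (x' - xs) : ℝ) + b * (inner ℝ u (y' - xs) : ℝ) := by
      rw [hsplit, inner_add_right, real_inner_smul_right, real_inner_smul_right]
    have hreal : g (a • x' + b • y') ≤ a * g x' + b * g y' := by
      have heq : (inner ℝ u (a • x' + b • y' - xs) : ℝ) - t0 =
          a * ((inner ℝ u (x' - xs) : ℝ) - t0) + b * ((inner ℝ u (y' - xs) : ℝ) - t0) := by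
        rw [hinner]; linear_combination t0 * hab
      simp only [hg_def, heq]
      exact aux_convex_real r c _ _ a b hc0.le ha hb hab
    show ((g (a • x' + b • y') : ℝ) : EReal) ≤ (a : EReal) * ↑(g x') + (b : EReal) * ↑(g y')
    rw [← EReal.coe_mul, ← EReal.coe_mul, ← EReal.coe_add]
    exact EReal.coe_le_coe_iff.mpr hreal
  have hminor : ∀ z, h z ≤ f z := by
    intro z
    rcases eq_or_ne (f z) ⊤ with htop | htop
    · rw [htop]; exact le_top
    · rcases le_or_gt (inner ℝ u (z - xs) : ℝ) t0 with hle | hlt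
      · have hgz : g z = r := by
          simp only [hg_def]
          rw [max_eq_right (by linarith)]
          ring
        show ((g z : ℝ) : EReal) ≤ f z
        rw [hgz]
        exact hfxs_le z
      · have hb := hRb z htop
        have hmx : max ((inner ℝ u (z - xs) : ℝ) - t0) 0 = (inner ℝ u (z - xs) : ℝ) - t0 :=
          max_eq_left (by linarith)
        have h1 : g z ≤ r + δ := by
          simp only [hg_def, hmx]
          have h2 : c * ((inner ℝ u (z - xs) : ℝ) - t0) ≤ c * R :=
            mul_le_mul_of_nonneg_left (by linarith) hc0.le
          have h3 : c * R = δ := div_mul_cancel₀ δ hR0.ne'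
          linarith
        calc h z = ((g z : ℝ) : EReal) := rfl
          _ ≤ ((r + δ : ℝ) : EReal) := EReal.coe_le_coe_iff.mpr h1
          _ ≤ f z := hsep z hlt.le
  have hgx : g x = r + c * t0 := by
    have hxin : (inner ℝ u (x - xs) : ℝ) = 2 * t0 := by
      rw [← hu, real_inner_self_eq_norm_sq]
      rw [ht0_def]; ring
    simp only [hg_def, hxin]
    rw [max_eq_left (by linarith)]
    ring
  -- Step D: lce f xs = r
  have hlce_xs : lce f xs = (r : EReal) := by
    apply le_antisymm
    · apply sSup_le
      rintro y ⟨h', _, hmin', rfl⟩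
      exact le_trans (hmin' xs) hr.symm.le
    · apply le_sSup
      refine ⟨fun _ => (r : EReal), ?_, fun z => hfxs_le z, rfl⟩
      intro x' y' a b ha hb hab
      rw [← EReal.coe_mul, ← EReal.coe_mul, ← EReal.coe_add]
      rw [EReal.coe_le_coe_iff]
      have : a * r + b * r = r := by linear_combination r * hab
      linarith
  -- Step E: conclude
  have hlce_x : ((r + c * t0 : ℝ) : EReal) ≤ lce f x := by
    apply le_sSup
    refine ⟨h, hconv, hminor, ?_⟩
    show ((g x : ℝ) : EReal) = _
    rw [hgx]
  rw [hlce_xs]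
  calc (r : EReal) < ((r + c * t0 : ℝ) : EReal) := by
        rw [EReal.coe_lt_coe_iff]; nlinarith
    _ ≤ lce f x := hlce_x
end
end

section
/- The function f : ℝ → (-∞,∞] defined by f(0) = 0, f(x) = x − 1/2 for 1/2 < x ≤ 1, and f(x) = ∞ otherwise, has a unique minimizer (x = 0), but its lower convex envelope attains its minimum at more than one point. -/
open scoped BigOperators
open Classical

noncomputable section

theorem stmt_4 (f : ℝ → EReal)
    (hf : f = fun x => if x = 0 then (0 : EReal)
      else if 1/2 < x ∧ x ≤ 1 then ((x - 1/2 : ℝ) : EReal) else ⊤) :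
    (∀ x, x ≠ 0 → f 0 < f x) ∧
    (∃ x₁ x₂ : ℝ, x₁ ≠ x₂ ∧ (∀ y, lce f x₁ ≤ lce f y) ∧ (∀ y, lce f x₂ ≤ lce f y)) := by
  have hf0 : f 0 = 0 := by simp [hf]
  have part1 : ∀ x, x ≠ 0 → f 0 < f x := by
    intro x hx
    rw [hf0, hf]
    simp only
    rw [if_neg hx]
    split_ifs with h
    · exact EReal.coe_pos.mpr (by linarith [h.1])
    · exact lt_of_lt_of_le (EReal.coe_pos.mpr one_pos) le_top
  have hlb : ∀ y : ℝ, (0 : EReal) ≤ lce f y := by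
    intro y
    apply le_sSup
    refine ⟨fun _ => 0, ?_, ?_, rfl⟩
    · intro x y a b ha hb hab; simp
    · intro z
      rw [hf]
      simp only
      split_ifs with h1 h2
      · exact le_refl _
      · exact EReal.coe_nonneg.mpr (by linarith [h2.1])
      · exact le_top
  have h0 : lce f 0 ≤ 0 := by
    apply sSup_le
    rintro y ⟨h, hc, hle, rfl⟩
    exact (hle 0).trans_eq hf0
  have hhalf : ∀ δ : ℝ, 0 < δ → δ ≤ 1/2 → lce f (1/2) ≤ ((δ : ℝ) : EReal) := by
    intro δ hδ hδ2
    apply sSup_le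
    rintro y ⟨h, hc, hle, rfl⟩
    set p : ℝ := 1/2 + δ with hp
    have hppos : 0 < p := by positivity
    set t : ℝ := 1/(2*p) with ht
    have htpos : 0 < t := by positivity
    have ht1 : t ≤ 1 := by
      rw [ht, div_le_one (by positivity)]; rw [hp]; linarith
    have hcomb := hc p 0 t (1-t) htpos.le (by linarith) (by ring)
    have heq : t • p + (1-t) • (0:ℝ) = 1/2 := by
      simp only [smul_eq_mul, mul_zero, add_zero, ht]
      field_simp
    rw [heq] at hcomb
    have hfp : h p ≤ ((δ : ℝ) : EReal) := by
      refine (hle p).trans ?_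
      rw [hf]
      simp only
      rw [if_neg hppos.ne', if_pos ⟨by rw [hp]; linarith, by rw [hp]; linarith⟩]
      exact le_of_eq (by norm_num [hp])
    have hf0' : h 0 ≤ 0 := (hle 0).trans_eq hf0
    have hstep1 : ((t:ℝ) : EReal) * h p ≤ ((t:ℝ) : EReal) * ((δ:ℝ) : EReal) :=
      mul_le_mul_of_nonneg_left hfp (EReal.coe_nonneg.mpr htpos.le)
    have hstep2 : (((1-t):ℝ) : EReal) * h 0 ≤ 0 := by
      calc (((1-t):ℝ) : EReal) * h 0 ≤ (((1-t):ℝ) : EReal) * 0 :=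
            mul_le_mul_of_nonneg_left hf0' (EReal.coe_nonneg.mpr (by linarith))
        _ = 0 := mul_zero _
    calc h (1/2) ≤ ((t:ℝ) : EReal) * h p + (((1-t):ℝ) : EReal) * h 0 := hcomb
      _ ≤ ((t:ℝ) : EReal) * ((δ:ℝ) : EReal) + 0 := add_le_add hstep1 hstep2
      _ = ((t * δ : ℝ) : EReal) := by rw [add_zero, ← EReal.coe_mul]
      _ ≤ ((δ : ℝ) : EReal) := by
          apply EReal.coe_le_coe_iff.mpr
          nlinarith
  have hhalf0 : lce f (1/2) ≤ 0 := by
    by_contra hcon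
    push_neg at hcon
    obtain ⟨c, hc0, hclt⟩ := EReal.lt_iff_exists_real_btwn.mp hcon
    have hcpos : (0:ℝ) < c := EReal.coe_pos.mp hc0
    have := hhalf (min c (1/2)) (lt_min hcpos (by norm_num)) (min_le_right _ _)
    have : lce f (1/2) ≤ ((c:ℝ) : EReal) :=
      this.trans (EReal.coe_le_coe_iff.mpr (min_le_left _ _))
    exact absurd hclt (not_lt.mpr this)
  refine ⟨part1, 0, 1/2, by norm_num, ?_, ?_⟩
  · intro y; exact h0.trans (hlb y)
  · intro y; exact hhalf0.trans (hlb y)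
end
end

section
/- If the lower convex envelope f̆ of f is proper, z is an interior point of dom(f), and f is convex at z, then f has a subgradient at z: there exists g with f(x) ≥ ⟨g, x − z⟩ + f(z) for all x. -/
open scoped BigOperators
open Classical

noncomputable section

lemma ereal_coe_sum' {ι : Type*} (s : Finset ι) (g : ι → ℝ) :
    ((∑ i ∈ s, g i : ℝ) : EReal) = ∑ i ∈ s, ((g i : ℝ) : EReal) := by
  induction s using Finset.cons_induction with
  | empty => simp
  | cons a s ha ih => rw [Finset.sum_cons, Finset.sum_cons, EReal.coe_add, ih]

set_option maxHeartbeats 1000000 in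
theorem stmt_9 {n : ℕ} (f : EuclideanSpace ℝ (Fin n) → EReal)
    (hbot : ∀ x, f x ≠ ⊥)
    (hproper : (∀ x, lce f x ≠ ⊥) ∧ ∃ x, lce f x ≠ ⊤)
    (z : EuclideanSpace ℝ (Fin n))
    (hz : z ∈ interior {x | f x ≠ ⊤})
    (hconv : IsConvexAt f z) :
    ∃ g : EuclideanSpace ℝ (Fin n),
      ∀ x, ((inner ℝ g (x - z) : ℝ) : EReal) + f z ≤ f x := by
  classical
  obtain ⟨r, hr0, hball⟩ : ∃ r > 0, Metric.ball z r ⊆ {x | f x ≠ ⊤} := by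
    rcases Metric.isOpen_iff.1 isOpen_interior z hz with ⟨r, hr, h⟩
    exact ⟨r, hr, h.trans interior_subset⟩
  have hfz_ne_top : f z ≠ ⊤ := interior_subset hz
  set fz := (f z).toReal with hfzdef
  have hfz : f z = (fz : EReal) := (EReal.coe_toReal hfz_ne_top (hbot z)).symm
  set S : Set ((EuclideanSpace ℝ (Fin n)) × ℝ) := {p | f p.1 ≤ (p.2 : EReal)} with hS
  set E := convexHull ℝ S with hE
  have hSE : S ⊆ E := subset_convexHull ℝ S
  have hEconv : Convex ℝ E := convex_convexHull ℝ S
  have hfin : ∀ x ∈ Metric.ball z r, f x = (((f x).toReal : ℝ) : EReal) := fun x hx =>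
    (EReal.coe_toReal (hball hx) (hbot x)).symm
  have hmemS : ∀ x ∈ Metric.ball z r, (x, (f x).toReal) ∈ S := fun x hx =>
    le_of_eq (hfin x hx)
  have hzball : z ∈ Metric.ball z r := Metric.mem_ball_self hr0
  have hmemz : ((z, fz) : _ × ℝ) ∈ S := by
    have := hmemS z hzball
    simpa [hfzdef] using this
  -- Key lemma: any point of E above z has height at least f z
  have keyA : ∀ p ∈ E, p.1 = z → f z ≤ (p.2 : EReal) := by
    intro p hp hp1
    rw [hE, mem_convexHull_iff_exists_fintype] at hp
    obtain ⟨ι, hι, w, q, hw0, hw1, hqS, hsum⟩ := hp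
    have e : Fin (Fintype.card ι) ≃ ι := (Fintype.equivFin ι).symm
    have hsum1 : (∑ k, w (e k)) = 1 := by
      rw [Equiv.sum_comp e w]; exact hw1
    have hfst : (∑ i, w i • q i).1 = ∑ i, w i • (q i).1 := by
      rw [Prod.fst_sum]; rfl
    have hsnd : (∑ i, w i • q i).2 = ∑ i, w i * (q i).2 := by
      rw [Prod.snd_sum]; rfl
    have hsumz : (∑ k, w (e k) • (q (e k)).1) = z := by
      rw [Equiv.sum_comp e (fun i => w i • (q i).1), ← hfst, hsum, hp1]
    have hne : ∀ k, f ((q (e k)).1) ≠ ⊤ := fun k =>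
      ne_top_of_le_ne_top (EReal.coe_ne_top _) (hqS (e k))
    have h0 := hconv _ (fun k => w (e k)) (fun k => (q (e k)).1)
      (fun k => hw0 _) hsum1 hne hsumz
    refine h0.trans ?_
    have hstep : ∑ k, ((w (e k) : ℝ) : EReal) * f ((q (e k)).1)
        ≤ ∑ k, ((w (e k) : ℝ) : EReal) * (((q (e k)).2 : ℝ) : EReal) := by
      refine Finset.sum_le_sum fun k _ => ?_
      exact mul_le_mul_of_nonneg_left (hqS (e k)) (by exact_mod_cast hw0 (e k))
    refine hstep.trans ?_
    have : ∑ k, ((w (e k) : ℝ) : EReal) * (((q (e k)).2 : ℝ) : EReal)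
        = ((∑ k, w (e k) * (q (e k)).2 : ℝ) : EReal) := by
      rw [ereal_coe_sum']
      exact Finset.sum_congr rfl fun k _ => (EReal.coe_mul _ _).symm
    rw [this]
    have : ∑ k, w (e k) * (q (e k)).2 = p.2 := by
      rw [Equiv.sum_comp e (fun i => w i * (q i).2), ← hsnd, hsum]
    rw [this]
  -- (z, fz) is not in the interior of E
  have hznotint : ((z, fz) : _ × ℝ) ∉ interior E := by
    intro h
    obtain ⟨ε, hε, hb⟩ := Metric.isOpen_iff.1 isOpen_interior _ h
    have hmem : ((z, fz - ε / 2) : _ × ℝ) ∈ E := by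
      refine interior_subset (hb ?_)
      rw [Metric.mem_ball, Prod.dist_eq]
      have h1 : dist (fz - ε / 2) fz = ε / 2 := by
        rw [Real.dist_eq, show fz - ε / 2 - fz = -(ε / 2) by ring, abs_neg,
          abs_of_pos (by linarith)]
      rw [h1, dist_self]
      exact max_lt hε (by linarith)
    have := keyA _ hmem rfl
    rw [hfz] at this
    simp only [EReal.coe_le_coe_iff] at this
    linarith
  -- E has nonempty interior
  have hSne : S.Nonempty := ⟨(z, fz), hmemz⟩
  have hvert : (((0 : EuclideanSpace ℝ (Fin n)), (1 : ℝ))) ∈ vectorSpan ℝ S := by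
    have h1 : ((z, fz + 1) : _ × ℝ) ∈ S := by
      show f z ≤ ((fz + 1 : ℝ) : EReal)
      rw [hfz]
      exact_mod_cast by linarith
    have := vsub_mem_vectorSpan ℝ h1 hmemz
    simpa using this
  have hdir : ∀ x ∈ Metric.ball z r,
      (((x - z : EuclideanSpace ℝ (Fin n)), (0 : ℝ))) ∈ vectorSpan ℝ S := by
    intro x hx
    have h3 := vsub_mem_vectorSpan ℝ (hmemS x hx) hmemz
    have h4 := Submodule.sub_mem _ h3 (Submodule.smul_mem _ ((f x).toReal - fz) hvert)
    convert h4 using 1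
    ext <;> simp
  have hall : ∀ v : EuclideanSpace ℝ (Fin n),
      ((v, (0 : ℝ))) ∈ vectorSpan ℝ S := by
    intro v
    rcases eq_or_ne v 0 with rfl | hv
    · exact (vectorSpan ℝ S).zero_mem
    · have hnv : (0:ℝ) < ‖v‖ := norm_pos_iff.2 hv
      have hc : (0:ℝ) < r / (2 * ‖v‖) := by positivity
      have hsmall : z + (r / (2 * ‖v‖)) • v ∈ Metric.ball z r := by
        rw [Metric.mem_ball, dist_eq_norm]
        have : z + (r / (2 * ‖v‖)) • v - z = (r / (2 * ‖v‖)) • v := by abel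
        rw [this, norm_smul, Real.norm_eq_abs, abs_of_pos hc]
        rw [div_mul_eq_mul_div, mul_comm]
        rw [div_lt_iff₀ (by positivity)]
        nlinarith
      have h5 := hdir _ hsmall
      have h6 := Submodule.smul_mem (vectorSpan ℝ S) ((2 * ‖v‖) / r) h5
      have heq : ((2 * ‖v‖) / r) •
          (((z + (r / (2 * ‖v‖)) • v - z : EuclideanSpace ℝ (Fin n)), (0:ℝ))
            : EuclideanSpace ℝ (Fin n) × ℝ) = (v, (0:ℝ)) := by
        have h7 : z + (r / (2 * ‖v‖)) • v - z = (r / (2 * ‖v‖)) • v := by abel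
        have h8 : (2 * ‖v‖) / r * (r / (2 * ‖v‖)) = 1 := by field_simp
        rw [h7, Prod.smul_mk, smul_smul, h8, one_smul, smul_zero]
      rw [heq] at h6
      exact h6
  have hspan : vectorSpan ℝ S = ⊤ := by
    rw [eq_top_iff]
    rintro ⟨v, t⟩ -
    have h7 := Submodule.add_mem _ (hall v) (Submodule.smul_mem _ t hvert)
    convert h7 using 1
    ext <;> simp
  have hne : (interior E).Nonempty := by
    rw [hEconv.interior_nonempty_iff_affineSpan_eq_top]
    have h10 : affineSpan ℝ S = ⊤ :=
      (AffineSubspace.affineSpan_eq_top_iff_vectorSpan_eq_top_of_nonempty ℝ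
        (EuclideanSpace ℝ (Fin n) × ℝ) (EuclideanSpace ℝ (Fin n) × ℝ) hSne).2 hspan
    rw [eq_top_iff, ← h10]
    exact affineSpan_mono ℝ hSE
  obtain ⟨w0, hw0E⟩ := hne
  -- separation
  obtain ⟨L, hL⟩ := geometric_hahn_banach_open_point hEconv.interior isOpen_interior hznotint
  have hLE : ∀ p ∈ E, L p ≤ L (z, fz) := by
    intro p hp
    by_contra hgt
    push_neg at hgt
    have hw0lt : L w0 < L (z, fz) := hL w0 hw0E
    set c := L ((z, fz) : _ × ℝ) with hc
    set t : ℝ := (L p - c) / (L p - L w0) with ht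
    have h1 : 0 < L p - c := by linarith
    have h2 : 0 < L p - L w0 := by linarith
    have htpos : 0 < t := div_pos h1 h2
    have htle : t ≤ 1 := by rw [ht, div_le_one h2]; linarith
    have hmem := hEconv.add_smul_sub_mem_interior hp hw0E ⟨htpos, htle⟩
    have h8 := hL _ hmem
    rw [map_add, map_smul, map_sub] at h8
    have h9 : t * (L p - L w0) = L p - c := by
      rw [ht, div_mul_cancel₀ _ (ne_of_gt h2)]
    simp only [smul_eq_mul] at h8
    nlinarith
  -- decompose L
  set U : (EuclideanSpace ℝ (Fin n)) →L[ℝ] ℝ :=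
    L.comp (ContinuousLinearMap.inl ℝ (EuclideanSpace ℝ (Fin n)) ℝ) with hU
  have hUapp : ∀ x : EuclideanSpace ℝ (Fin n), U x = L (x, 0) := fun x => rfl
  set c0 : ℝ := L (0, 1) with hc0def
  have hdecomp : ∀ (x : EuclideanSpace ℝ (Fin n)) (t : ℝ), L (x, t) = U x + t * c0 := by
    intro x t
    have : ((x, t) : _ × ℝ) = (x, 0) + t • ((0 : EuclideanSpace ℝ (Fin n)), (1:ℝ)) := by
      ext <;> simp
    rw [this, map_add, map_smul, hUapp]
    simp [hc0def]
  have hLz : L ((z, fz) : _ × ℝ) = U z + fz * c0 := hdecomp z fz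
  have hmemE2 : ((z, fz + 1) : _ × ℝ) ∈ E := by
    refine hSE ?_
    show f z ≤ ((fz + 1 : ℝ) : EReal)
    rw [hfz]; exact_mod_cast by linarith
  have hc0le : c0 ≤ 0 := by
    have := hLE _ hmemE2
    rw [hdecomp, hLz] at this
    nlinarith
  have hc0ne : c0 ≠ 0 := by
    intro hc00
    have hU0 : ∀ v : EuclideanSpace ℝ (Fin n), U v = 0 := by
      have hub : ∀ x ∈ Metric.ball z r, U x ≤ U z := by
        intro x hx
        have := hLE _ (hSE (hmemS x hx))
        rw [hdecomp, hLz, hc00] at this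
        simpa using this
      intro v
      rcases eq_or_ne v 0 with rfl | hv
      · simp
      · have hnv : (0:ℝ) < ‖v‖ := norm_pos_iff.2 hv
        have hc : (0:ℝ) < r / (2 * ‖v‖) := by positivity
        have hball2 : ∀ s : ℝ, |s| ≤ r / (2 * ‖v‖) → z + s • v ∈ Metric.ball z r := by
          intro s hs
          rw [Metric.mem_ball, dist_eq_norm]
          have : z + s • v - z = s • v := by abel
          rw [this, norm_smul, Real.norm_eq_abs]
          have h9 : (r / (2 * ‖v‖)) * ‖v‖ = r / 2 := by field_simp
          calc |s| * ‖v‖ ≤ (r / (2 * ‖v‖)) * ‖v‖ :=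
                mul_le_mul_of_nonneg_right hs (norm_nonneg v)
            _ = r / 2 := h9
            _ < r := by linarith
        have hp1 := hub _ (hball2 (r / (2 * ‖v‖)) (by rw [abs_of_pos hc]))
        have hp2 := hub _ (hball2 (-(r / (2 * ‖v‖))) (by rw [abs_neg, abs_of_pos hc]))
        rw [map_add, map_smul] at hp1 hp2
        simp only [smul_eq_mul, neg_smul, map_neg] at hp1 hp2
        have : U v = 0 := by nlinarith
        exact this
    have hLall : ∀ p : (EuclideanSpace ℝ (Fin n)) × ℝ, L p = 0 := by
      intro p
      have := hdecomp p.1 p.2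
      rw [hU0, hc00] at this
      simpa using this
    have := hL w0 hw0E
    rw [hLall, hLall] at this
    exact lt_irrefl _ this
  have hc0 : c0 < 0 := lt_of_le_of_ne hc0le hc0ne
  -- define the subgradient
  set g : EuclideanSpace ℝ (Fin n) :=
    (InnerProductSpace.toDual ℝ (EuclideanSpace ℝ (Fin n))).symm ((-c0)⁻¹ • U) with hg
  have hginner : ∀ y : EuclideanSpace ℝ (Fin n), (inner ℝ g y : ℝ) = (-c0)⁻¹ * U y := by
    intro y
    rw [hg, InnerProductSpace.toDual_symm_apply]
    rfl
  refine ⟨g, fun x => ?_⟩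
  by_cases hx : f x = ⊤
  · rw [hx]; exact le_top
  · have hfx : f x = (((f x).toReal : ℝ) : EReal) := (EReal.coe_toReal hx (hbot x)).symm
    set Mx := (f x).toReal with hMx
    have hmemx : ((x, Mx) : _ × ℝ) ∈ E := hSE (le_of_eq hfx)
    have h10 := hLE _ hmemx
    rw [hdecomp, hLz] at h10
    have hpos : (0:ℝ) < -c0 := by linarith
    have h11 : U x - U z ≤ (Mx - fz) * (-c0) := by nlinarith
    have h12 : (-c0)⁻¹ * (U x - U z) ≤ Mx - fz := by
      have := mul_le_mul_of_nonneg_left h11 (le_of_lt (inv_pos.2 hpos))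
      calc (-c0)⁻¹ * (U x - U z) ≤ (-c0)⁻¹ * ((Mx - fz) * (-c0)) := this
        _ = Mx - fz := by field_simp
    have h13 : (inner ℝ g (x - z) : ℝ) + fz ≤ Mx := by
      rw [hginner, map_sub]
      linarith
    rw [hfz, hfx, ← EReal.coe_add]
    exact_mod_cast h13
end
end

section
/- Let f : ℝⁿ → (-∞,∞] be K-Lipschitz on its effective domain with unique minimizer x*, let x₀ ≠ x*, let d be a unit vector, α > 0 a step size, x_m = x₀ + mα d, and d₀ = (x* − x₀)/‖x* − x₀‖. Then with m = ⌊‖x* − x₀‖/α⌋, f(x_m) − f(x*) ≤ Kα + K‖x* − x₀‖·‖d − d₀‖, provided x_m ∈ dom(f). -/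
open scoped BigOperators
open Classical

noncomputable section

theorem stmt_14 {n : ℕ} (f : EuclideanSpace ℝ (Fin n) → EReal)
    (hbot : ∀ x, f x ≠ ⊥) (K : ℝ) (hK : 0 ≤ K)
    (hlip : ∀ x ∈ {x | f x ≠ ⊤}, ∀ y ∈ {x | f x ≠ ⊤},
      f x ≤ f y + ((K * ‖x - y‖ : ℝ) : EReal))
    (xs : EuclideanSpace ℝ (Fin n)) (hxs : f xs ≠ ⊤)
    (hmin : ∀ x, x ≠ xs → f xs < f x)
    (x₀ : EuclideanSpace ℝ (Fin n)) (hne : x₀ ≠ xs)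
    (d : EuclideanSpace ℝ (Fin n)) (hd : ‖d‖ = 1)
    (α : ℝ) (hα : 0 < α)
    (m : ℕ) (hm : m = ⌊‖xs - x₀‖ / α⌋₊)
    (d₀ : EuclideanSpace ℝ (Fin n)) (hd₀ : d₀ = ‖xs - x₀‖⁻¹ • (xs - x₀))
    (xm : EuclideanSpace ℝ (Fin n)) (hxm : xm = x₀ + ((m : ℝ) * α) • d)
    (hdom : f xm ≠ ⊤) :
    f xm ≤ f xs + ((K * α + K * ‖xs - x₀‖ * ‖d - d₀‖ : ℝ) : EReal) := by
  
  set r := ‖xs - x₀‖ with hr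
  have hrpos : 0 < r := by
    simpa [hr] using norm_pos_iff.mpr (sub_ne_zero.mpr (Ne.symm hne))
  have hma : (m : ℝ) * α ≤ r := by
    have h1 : (m : ℝ) ≤ r / α := by
      rw [hm]; exact Nat.floor_le (div_nonneg hrpos.le hα.le)
    calc (m : ℝ) * α ≤ (r / α) * α := by nlinarith
      _ = r := by field_simp
  have hra : r - (m : ℝ) * α ≤ α := by
    have h2 : r / α < (m : ℝ) + 1 := by
      rw [hm]; exact Nat.lt_floor_add_one _
    have := (div_lt_iff₀ hα).mp h2
    nlinarith
  have hd₀norm : ‖d₀‖ = 1 := by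
    rw [hd₀, norm_smul, norm_inv, norm_norm]
    field_simp
    exact div_self hrpos.ne'
  have hxs0 : xs - x₀ = r • d₀ := by
    rw [hd₀, smul_smul]
    field_simp
    rw [one_smul]
  have hdecomp : xm - xs = ((m : ℝ) * α) • (d - d₀) + (((m : ℝ) * α) - r) • d₀ := by
    rw [hxm]
    have : x₀ - xs = -(r • d₀) := by rw [← hxs0]; abel
    rw [smul_sub, sub_smul]
    rw [show x₀ + ((m : ℝ) * α) • d - xs = ((m : ℝ) * α) • d + (x₀ - xs) by abel, this]
    abel
  have hnorm : ‖xm - xs‖ ≤ α + r * ‖d - d₀‖ := by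
    rw [hdecomp]
    calc ‖((m : ℝ) * α) • (d - d₀) + (((m : ℝ) * α) - r) • d₀‖
        ≤ ‖((m : ℝ) * α) • (d - d₀)‖ + ‖(((m : ℝ) * α) - r) • d₀‖ := norm_add_le _ _
      _ = |(m : ℝ) * α| * ‖d - d₀‖ + |((m : ℝ) * α) - r| * 1 := by
          rw [norm_smul, norm_smul, hd₀norm, Real.norm_eq_abs, Real.norm_eq_abs]
      _ ≤ r * ‖d - d₀‖ + α := by
          have hmn : (0:ℝ) ≤ (m : ℝ) * α := by positivity
          have h1 : |(m : ℝ) * α| ≤ r := by rw [abs_of_nonneg hmn]; exact hma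
          have h2 : |((m : ℝ) * α) - r| ≤ α := by
            rw [abs_sub_comm, abs_of_nonneg (by linarith)]; exact hra
          have hnn : (0:ℝ) ≤ ‖d - d₀‖ := norm_nonneg _
          nlinarith [mul_le_mul_of_nonneg_right h1 hnn]
      _ = α + r * ‖d - d₀‖ := by ring
  have hreal : K * ‖xm - xs‖ ≤ K * α + K * r * ‖d - d₀‖ := by nlinarith
  calc f xm ≤ f xs + ((K * ‖xm - xs‖ : ℝ) : EReal) := hlip xm hdom xs hxs
    _ ≤ f xs + ((K * α + K * r * ‖d - d₀‖ : ℝ) : EReal) := by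
        apply add_le_add_right
        exact_mod_cast hreal
end
end

section
/- Let f : ℝⁿ → (-∞,∞] be proper and lower semicontinuous with bounded effective domain, and fix x ∈ conv(dom(f)). Then the infimum defining the lower convex envelope f̆(x) = inf { Σ_{k=1}^{n+1} λ_k f(x_k) : Σ λ_k x_k = x, λ_k ≥ 0, Σ λ_k = 1, x_k ∈ dom(f) } is attained by some (λ, x₁,…,x_{n+1}). -/
open scoped BigOperators
open Classical

noncomputable section

open scoped ENNReal NNReal


theorem aux_lsc_mul {β : Type*} [TopologicalSpace β] {a : β → ℝ≥0∞} {g : β → ℝ≥0∞}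
    (ha : Continuous a) (ha' : ∀ z, a z ≠ ⊤) (hg : LowerSemicontinuous g) :
    LowerSemicontinuous fun z => a z * g z := by
  intro z₀ b hb
  change b < a z₀ * g z₀ at hb
  have hA0 : a z₀ ≠ 0 := by
    rintro h
    simp [h] at hb
  have h1 : b / a z₀ < g z₀ := by
    refine (ENNReal.div_lt_iff (Or.inl hA0) (Or.inl (ha' z₀))).2 ?_
    rwa [mul_comm] at hb
  obtain ⟨q, hq1, hq2⟩ := exists_between h1
  have hqtop : q ≠ ⊤ := hq2.ne_top
  have hb_lt : b < a z₀ * q := by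
    have := (ENNReal.div_lt_iff (Or.inl hA0) (Or.inl (ha' z₀))).1 hq1
    rwa [mul_comm] at this
  have hq0 : q ≠ 0 := by
    rintro rfl
    simp at hb_lt
  have h2 : b / q < a z₀ := (ENNReal.div_lt_iff (Or.inl hq0) (Or.inl hqtop)).2 hb_lt
  obtain ⟨A, hA1, hA2⟩ := exists_between h2
  have hbA : b < A * q := (ENNReal.div_lt_iff (Or.inl hq0) (Or.inl hqtop)).1 hA1
  have ev1 : ∀ᶠ z in nhds z₀, A < a z :=
    Filter.eventually_of_mem (ha.continuousAt.preimage_mem_nhds (Ioi_mem_nhds hA2)) fun z hz => hz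
  have ev2 : ∀ᶠ z in nhds z₀, q < g z := hg z₀ q hq2
  filter_upwards [ev1, ev2] with z h1z h2z
  calc b < A * q := hbA
    _ ≤ a z * g z := mul_le_mul' h1z.le h2z.le

theorem aux_lsc_min {β : Type*} [TopologicalSpace β] [T2Space β] {s : Set β} (hs : IsCompact s)
    (hne : s.Nonempty) {g : β → ℝ≥0∞} (hg : LowerSemicontinuous g) :
    ∃ z ∈ s, ∀ y ∈ s, g z ≤ g y := by
  by_cases htop : ∀ y ∈ s, g y = ⊤
  · obtain ⟨z, hz⟩ := hne
    exact ⟨z, hz, fun y hy => by rw [htop y hy]; exact le_top⟩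
  push_neg at htop
  obtain ⟨y₀, hy₀s, hy₀⟩ := htop
  set μ := sInf (g '' s) with hμ
  have hμtop : μ < ⊤ := lt_of_le_of_lt (sInf_le ⟨y₀, hy₀s, rfl⟩) hy₀.lt_top
  have hne' : Nonempty {b : ℝ≥0∞ // μ < b} := ⟨⟨⊤, hμtop⟩⟩
  set K : {b : ℝ≥0∞ // μ < b} → Set β := fun b => s ∩ {z | g z ≤ b.1} with hK
  have hKne : ∀ b, (K b).Nonempty := by
    rintro ⟨b, hb⟩
    obtain ⟨y, ⟨z, hzs, rfl⟩, hlt⟩ := sInf_lt_iff.1 hb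
    exact ⟨z, hzs, hlt.le⟩
  have hKcl : ∀ b, IsClosed (K b) := fun b =>
    hs.isClosed.inter (lowerSemicontinuous_iff_isClosed_preimage.1 hg b.1)
  have hKcp : ∀ b, IsCompact (K b) := fun b =>
    hs.inter_right (lowerSemicontinuous_iff_isClosed_preimage.1 hg b.1)
  have hdir : Directed (fun x1 x2 => x1 ⊇ x2) K := by
    rintro ⟨b₁, h₁⟩ ⟨b₂, h₂⟩
    refine ⟨⟨min b₁ b₂, lt_min h₁ h₂⟩, ?_, ?_⟩
    · refine Set.inter_subset_inter_right _ fun z hz => ?_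
      exact le_trans hz (min_le_left b₁ b₂)
    · refine Set.inter_subset_inter_right _ fun z hz => ?_
      exact le_trans hz (min_le_right b₁ b₂)
  obtain ⟨z, hz⟩ :=
    IsCompact.nonempty_iInter_of_directed_nonempty_isCompact_isClosed K hdir hKne hKcp hKcl
  have hzK : ∀ b, z ∈ K b := fun b => Set.mem_iInter.1 hz b
  refine ⟨z, (hzK ⟨⊤, hμtop⟩).1, fun y hy => ?_⟩
  have hgz : g z ≤ μ := by
    by_contra h
    push_neg at h
    obtain ⟨b, hb1, hb2⟩ := exists_between h
    exact absurd ((hzK ⟨b, hb1⟩).2) (not_le.2 hb2)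
  exact hgz.trans (sInf_le ⟨y, hy, rfl⟩)

theorem aux_lower_bound {β : Type*} [TopologicalSpace β] {D : Set β} (hD : IsCompact D)
    {f : β → EReal} (hf : LowerSemicontinuous f) (hbot : ∀ y, f y ≠ ⊥) :
    ∃ c : ℝ, ∀ y ∈ D, (c : EReal) ≤ f y := by
  set U : ℕ → Set β := fun m => {y | (-(m : ℝ) : EReal) < f y} with hU
  have hUo : ∀ m, IsOpen (U m) := fun m => hf.isOpen_preimage _
  have hcov : D ⊆ ⋃ m, U m := by
    intro y _
    have hb : (⊥ : EReal) < f y := Ne.bot_lt (hbot y)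
    obtain ⟨r, _, hr2⟩ := EReal.lt_iff_exists_real_btwn.1 hb
    refine Set.mem_iUnion.2 ⟨⌈-r⌉₊, ?_⟩
    show (-(⌈-r⌉₊ : ℝ) : EReal) < f y
    refine lt_of_le_of_lt ?_ hr2
    have : -(⌈-r⌉₊ : ℝ) ≤ r := by
      have := Nat.le_ceil (-r)
      linarith
    exact_mod_cast this
  obtain ⟨t, ht⟩ := hD.elim_finite_subcover U hUo hcov
  refine ⟨-((t.sup id : ℕ) : ℝ), fun y hy => ?_⟩
  obtain ⟨m, hm, hym⟩ := Set.mem_iUnion₂.1 (ht hy)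
  have hmle : (m : ℝ) ≤ ((t.sup id : ℕ) : ℝ) := by
    exact_mod_cast Finset.le_sup (f := id) hm
  refine le_trans ?_ hym.le
  have : -((t.sup id : ℕ) : ℝ) ≤ -(m : ℝ) := by linarith
  exact_mod_cast this

/-- Shifted nonnegative `ℝ≥0∞`-valued version of `f`. -/
def auxF {β : Type*} (f : β → EReal) (c : ℝ) (y : β) : ℝ≥0∞ :=
  if f y = ⊤ then ⊤ else ENNReal.ofReal ((f y).toReal - c)

theorem auxF_lsc {β : Type*} [TopologicalSpace β] {f : β → EReal} (hf : LowerSemicontinuous f)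
    (hbot : ∀ y, f y ≠ ⊥) (c : ℝ) : LowerSemicontinuous (auxF f c) := by
  intro y₀ b hb
  have key : ∃ t : ℝ, (t : EReal) < f y₀ ∧ b < ENNReal.ofReal (t - c) := by
    by_cases h : f y₀ = ⊤
    · have hbtop : b ≠ ⊤ := by
        simp only [auxF, h, if_pos] at hb
        exact hb.ne
      refine ⟨c + b.toReal + 1, by rw [h]; exact EReal.coe_lt_top _, ?_⟩
      rw [ENNReal.lt_ofReal_iff_toReal_lt hbtop]
      linarith
    · have hbtop : b ≠ ⊤ := by
        simp only [auxF, h, if_neg, if_false] at hb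
        exact ne_top_of_lt hb
      have hb' : b.toReal < (f y₀).toReal - c := by
        simp only [auxF, h, if_false] at hb
        exact (ENNReal.lt_ofReal_iff_toReal_lt hbtop).1 hb
      obtain ⟨t, ht1, ht2⟩ := exists_between (show c + b.toReal < (f y₀).toReal by linarith)
      refine ⟨t, ?_, ?_⟩
      · rw [← EReal.coe_toReal h (hbot y₀)]
        exact_mod_cast ht2
      · rw [ENNReal.lt_ofReal_iff_toReal_lt hbtop]
        linarith
  obtain ⟨t, ht1, ht2⟩ := key
  have hbtop : b ≠ ⊤ := ne_top_of_lt ht2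
  filter_upwards [hf y₀ t ht1] with y hy
  by_cases hy' : f y = ⊤
  · simp only [auxF, hy', if_pos]
    exact hbtop.lt_top
  · simp only [auxF, hy', if_false]
    have hty : t < (f y).toReal := by
      rw [← EReal.coe_toReal hy' (hbot y)] at hy
      exact_mod_cast hy
    exact ht2.trans_le (ENNReal.ofReal_le_ofReal (by linarith))

theorem aux_coe_sum {ι : Type*} (s : Finset ι) (g : ι → ℝ) :
    ((∑ i ∈ s, g i : ℝ) : EReal) = ∑ i ∈ s, (g i : EReal) := by
  induction s using Finset.cons_induction with
  | empty => simp
  | cons i s hi ih => rw [Finset.sum_cons, Finset.sum_cons, EReal.coe_add, ih]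


theorem aux_sum_extend {M : Type*} [AddCommMonoid M] {ι : Type*} [Fintype ι] {m : ℕ}
    (e : ι ↪ Fin m) (g : Fin m → M) (hg : ∀ j, (∀ i, e i ≠ j) → g j = 0) :
    ∑ j, g j = ∑ i, g (e i) := by
  rw [← Finset.sum_image (g := e) (s := Finset.univ) (fun a _ b _ h => e.injective h)]
  symm
  refine Finset.sum_subset (Finset.subset_univ _) fun j _ hj => ?_
  refine hg j fun i hi => hj ?_
  exact Finset.mem_image.2 ⟨i, Finset.mem_univ i, hi⟩



theorem aux_identity {β : Type*} {f : β → EReal} (hbot : ∀ y, f y ≠ ⊥) (c : ℝ) {m : ℕ}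
    (w : Fin m → ℝ) (p : Fin m → β) (hw : ∀ k, 0 ≤ w k) (hw1 : ∑ k, w k = 1)
    (hp : ∀ k, f (p k) ≠ ⊤) (hc : ∀ k, (c : EReal) ≤ f (p k)) :
    ∑ k, (w k : EReal) * f (p k) =
      (c : EReal) + ((∑ k, ENNReal.ofReal (w k) * auxF f c (p k) : ℝ≥0∞) : EReal) := by
  set r : Fin m → ℝ := fun k => (f (p k)).toReal with hr
  have hfk : ∀ k, f (p k) = (r k : EReal) := fun k => (EReal.coe_toReal (hp k) (hbot (p k))).symm
  have hcr : ∀ k, c ≤ r k := fun k => by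
    have := hc k; rw [hfk k] at this; exact_mod_cast this
  have hterm : ∀ k, ENNReal.ofReal (w k) * auxF f c (p k) = ENNReal.ofReal (w k * (r k - c)) := by
    intro k
    rw [auxF, if_neg (hp k), ENNReal.ofReal_mul (hw k)]
  have hsum : (∑ k, ENNReal.ofReal (w k) * auxF f c (p k) : ℝ≥0∞) =
      ENNReal.ofReal (∑ k, w k * (r k - c)) := by
    rw [ENNReal.ofReal_sum_of_nonneg fun k _ => mul_nonneg (hw k) (sub_nonneg.2 (hcr k))]
    exact Finset.sum_congr rfl fun k _ => hterm k
  have hS : (0:ℝ) ≤ ∑ k, w k * (r k - c) :=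
    Finset.sum_nonneg fun k _ => mul_nonneg (hw k) (sub_nonneg.2 (hcr k))
  rw [hsum, EReal.coe_ennreal_ofReal, max_eq_left hS]
  have hSval : (∑ k, w k * (r k - c)) = (∑ k, w k * r k) - c := by
    simp only [mul_sub]
    rw [Finset.sum_sub_distrib, ← Finset.sum_mul, hw1, one_mul]
  rw [hSval]
  have : ((c : ℝ) : EReal) + (((∑ k, w k * r k) - c : ℝ) : EReal)
      = ((∑ k, w k * r k : ℝ) : EReal) := by
    rw [← EReal.coe_add]; norm_num
  rw [this, aux_coe_sum]
  exact Finset.sum_congr rfl fun k _ => by rw [hfk k, ← EReal.coe_mul]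

theorem stmt_16 {n : ℕ} (f : EuclideanSpace ℝ (Fin n) → EReal)
    (hbot : ∀ x, f x ≠ ⊥) (hproper : ∃ x, f x ≠ ⊤)
    (hlsc : LowerSemicontinuous f) (hbdd : Bornology.IsBounded {x | f x ≠ ⊤})
    (x : EuclideanSpace ℝ (Fin n)) (hx : x ∈ convexHull ℝ {y | f y ≠ ⊤}) :
    ∃ (w : Fin (n + 1) → ℝ) (p : Fin (n + 1) → EuclideanSpace ℝ (Fin n)),
      (∀ k, 0 ≤ w k) ∧ (∑ k, w k) = 1 ∧ (∀ k, f (p k) ≠ ⊤) ∧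
      (∑ k, w k • p k) = x ∧
      ∀ (w' : Fin (n + 1) → ℝ) (p' : Fin (n + 1) → EuclideanSpace ℝ (Fin n)),
        (∀ k, 0 ≤ w' k) → (∑ k, w' k) = 1 → (∀ k, f (p' k) ≠ ⊤) →
        (∑ k, w' k • p' k) = x →
        (∑ k, (w k : EReal) * f (p k)) ≤ ∑ k, (w' k : EReal) * f (p' k) := by
  classical
  obtain ⟨x₀, hx₀⟩ := hproper
  have hDcp : IsCompact (closure {y | f y ≠ ⊤}) := hbdd.isCompact_closure
  obtain ⟨c, hc⟩ := aux_lower_bound hDcp hlsc hbot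
  have hF_lsc := auxF_lsc hlsc hbot c
  have hFtop : ∀ y, f y ≠ ⊤ → auxF f c y ≠ ⊤ := fun y hy => by
    rw [auxF, if_neg hy]; exact ENNReal.ofReal_ne_top
  have hFtop' : ∀ y, auxF f c y ≠ ⊤ → f y ≠ ⊤ := fun y hy h => by
    rw [auxF, if_pos h] at hy; exact hy rfl
  -- Carathéodory
  obtain ⟨ι, hιF, z, v, hzs, haff, hvpos, hvsum, hvx⟩ := eq_pos_convex_span_of_mem_convexHull hx
  have hcard : Fintype.card ι ≤ n + 1 := by
    have h1 := haff.card_le_finrank_succ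
    have h2 : Module.finrank ℝ ↥(vectorSpan ℝ (Set.range z)) ≤ n := by
      have h3 := Submodule.finrank_le (vectorSpan ℝ (Set.range z))
      rwa [finrank_euclideanSpace_fin] at h3
    omega
  set e : ι ↪ Fin (n + 1) := (Fintype.equivFin ι).toEmbedding.trans (Fin.castLEEmb hcard) with he
  set wh : Fin (n + 1) → ℝ := Function.extend e v 0 with hwh
  set ph : Fin (n + 1) → EuclideanSpace ℝ (Fin n) := Function.extend e z (fun _ => x₀) with hph
  have hwh0 : ∀ j, (∀ i, e i ≠ j) → wh j = 0 := by
    intro j hj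
    rw [hwh, Function.extend_apply' _ _ _ (by rintro ⟨i, hi⟩; exact hj i hi)]
    rfl
  have hwhnn : ∀ j, 0 ≤ wh j := by
    intro j
    by_cases h : ∃ i, e i = j
    · obtain ⟨i, rfl⟩ := h
      rw [hwh, e.injective.extend_apply]
      exact (hvpos i).le
    · exact le_of_eq (hwh0 j (not_exists.1 h)).symm
  have hwhsum : (∑ j, wh j) = 1 := by
    rw [aux_sum_extend e wh hwh0]
    rw [← hvsum]
    exact Finset.sum_congr rfl fun i _ => by rw [hwh, e.injective.extend_apply]
  have hph_mem : ∀ j, f (ph j) ≠ ⊤ := by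
    intro j
    by_cases h : ∃ i, e i = j
    · obtain ⟨i, rfl⟩ := h
      rw [hph, e.injective.extend_apply]
      exact hzs ⟨i, rfl⟩
    · rw [hph, Function.extend_apply' _ _ _ (by rintro ⟨i, hi⟩; exact h ⟨i, hi⟩)]
      exact hx₀
  have hphsum : (∑ j, wh j • ph j) = x := by
    rw [aux_sum_extend e (fun j => wh j • ph j) (fun j hj => by show wh j • ph j = 0; rw [hwh0 j hj, zero_smul])]
    rw [← hvx]
    exact Finset.sum_congr rfl fun i _ => by
      rw [hwh, hph, e.injective.extend_apply, e.injective.extend_apply]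
  -- the compact constraint set
  set T : Set ((Fin (n + 1) → ℝ) × (Fin (n + 1) → EuclideanSpace ℝ (Fin n))) :=
    {q | (∀ k, 0 ≤ q.1 k) ∧ (∑ k, q.1 k) = 1 ∧
      (∀ k, q.2 k ∈ closure {y | f y ≠ ⊤}) ∧ (∑ k, q.1 k • q.2 k) = x} with hT
  have hqhT : (wh, ph) ∈ T :=
    ⟨hwhnn, hwhsum, fun k => subset_closure (hph_mem k), hphsum⟩
  set H : ((Fin (n + 1) → ℝ) × (Fin (n + 1) → EuclideanSpace ℝ (Fin n))) → ℝ≥0∞ :=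
    fun q => ∑ k, ENNReal.ofReal (q.1 k) * auxF f c (q.2 k) with hH
  have hHlsc : LowerSemicontinuous H := by
    refine lowerSemicontinuous_sum fun k _ => aux_lsc_mul ?_ (fun q => ENNReal.ofReal_ne_top) ?_
    · exact ENNReal.continuous_ofReal.comp ((continuous_apply k).comp continuous_fst)
    · exact hF_lsc.comp ((continuous_apply k).comp continuous_snd)
  have hTclosed : IsClosed T := by
    have hrw : T = ({q : (Fin (n + 1) → ℝ) × (Fin (n + 1) → EuclideanSpace ℝ (Fin n)) |
          ∀ k, 0 ≤ q.1 k} ∩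
        ({q | (∑ k, q.1 k) = 1} ∩
          ({q | ∀ k, q.2 k ∈ closure {y | f y ≠ ⊤}} ∩ {q | (∑ k, q.1 k • q.2 k) = x}))) := by
      ext q; simp only [hT, Set.mem_setOf_eq, Set.mem_inter_iff]
    rw [hrw]
    refine IsClosed.inter ?_ (IsClosed.inter ?_ (IsClosed.inter ?_ ?_))
    · have : {q : (Fin (n + 1) → ℝ) × (Fin (n + 1) → EuclideanSpace ℝ (Fin n)) |
          ∀ k, 0 ≤ q.1 k} = ⋂ k, {q | 0 ≤ q.1 k} := by
        ext q; simp [Set.mem_iInter]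
      rw [this]
      exact isClosed_iInter fun k =>
        isClosed_le continuous_const ((continuous_apply k).comp continuous_fst)
    · exact isClosed_eq
        (continuous_finset_sum _ fun k _ => (continuous_apply k).comp continuous_fst)
        continuous_const
    · have : {q : (Fin (n + 1) → ℝ) × (Fin (n + 1) → EuclideanSpace ℝ (Fin n)) |
          ∀ k, q.2 k ∈ closure {y | f y ≠ ⊤}} =
          ⋂ k, {q | q.2 k ∈ closure {y | f y ≠ ⊤}} := by
        ext q; simp [Set.mem_iInter]
      rw [this]
      exact isClosed_iInter fun k =>
        isClosed_closure.preimage ((continuous_apply k).comp continuous_snd)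
    · exact isClosed_eq
        (continuous_finset_sum _ fun k _ =>
          (((continuous_apply k).comp continuous_fst)).smul
            ((continuous_apply k).comp continuous_snd))
        continuous_const
  have hTsub : T ⊆ (Set.univ.pi fun _ : Fin (n + 1) => Set.Icc (0 : ℝ) 1) ×ˢ
      (Set.univ.pi fun _ : Fin (n + 1) => closure {y | f y ≠ ⊤}) := by
    rintro ⟨w', p'⟩ ⟨h1, h2, h3, h4⟩
    refine ⟨fun k _ => ⟨h1 k, ?_⟩, fun k _ => h3 k⟩
    calc w' k ≤ ∑ j, w' j := Finset.single_le_sum (fun i _ => h1 i) (Finset.mem_univ k)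
      _ = 1 := h2
  have hTcp : IsCompact T :=
    IsCompact.of_isClosed_subset
      ((isCompact_univ_pi fun _ => isCompact_Icc).prod (isCompact_univ_pi fun _ => hDcp))
      hTclosed hTsub
  obtain ⟨q, hqT, hqmin⟩ := aux_lsc_min hTcp ⟨(wh, ph), hqhT⟩ hHlsc
  obtain ⟨hq1, hq2, hq3, hq4⟩ := hqT
  have hHhfin : H (wh, ph) < ⊤ := by
    rw [hH]
    refine ENNReal.sum_lt_top.2 fun k _ => ENNReal.mul_lt_top ?_ ?_
    · exact ENNReal.ofReal_lt_top
    · exact (hFtop _ (hph_mem k)).lt_top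
  have hHtop : H q < ⊤ := (hqmin _ hqhT).trans_lt hHhfin
  have hterm : ∀ k, ENNReal.ofReal (q.1 k) * auxF f c (q.2 k) < ⊤ := fun k =>
    ENNReal.sum_lt_top.1 hHtop k (Finset.mem_univ k)
  set p : Fin (n + 1) → EuclideanSpace ℝ (Fin n) :=
    fun k => if q.1 k = 0 then x₀ else q.2 k with hp
  have hpdom : ∀ k, f (p k) ≠ ⊤ := by
    intro k
    show f (if q.1 k = 0 then x₀ else q.2 k) ≠ ⊤
    by_cases h : q.1 k = 0
    · rw [if_pos h]; exact hx₀
    · rw [if_neg h]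
      refine hFtop' _ fun hFt => ?_
      have h0 : ENNReal.ofReal (q.1 k) ≠ 0 := by
        rw [Ne, ENNReal.ofReal_eq_zero, not_le]
        exact lt_of_le_of_ne (hq1 k) (Ne.symm h)
      have := hterm k
      rw [hFt, ENNReal.mul_top h0] at this
      exact absurd this (lt_irrefl _)
  have hsmul : (∑ k, q.1 k • p k) = x := by
    rw [← hq4]
    refine Finset.sum_congr rfl fun k _ => ?_
    show q.1 k • (if q.1 k = 0 then x₀ else q.2 k) = q.1 k • q.2 k
    by_cases h : q.1 k = 0
    · rw [if_pos h, h, zero_smul, zero_smul]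
    · rw [if_neg h]
  have hHp : (∑ k, ENNReal.ofReal (q.1 k) * auxF f c (p k)) = H q := by
    rw [hH]
    refine Finset.sum_congr rfl fun k _ => ?_
    show ENNReal.ofReal (q.1 k) * auxF f c (if q.1 k = 0 then x₀ else q.2 k)
      = ENNReal.ofReal (q.1 k) * auxF f c (q.2 k)
    by_cases h : q.1 k = 0
    · rw [if_pos h, h]; simp
    · rw [if_neg h]
  refine ⟨q.1, p, hq1, hq2, hpdom, hsmul, ?_⟩
  intro w' p' hw' hw1' hp' hx'
  have hcP : ∀ k, (c : EReal) ≤ f (p k) := by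
    intro k
    refine hc _ ?_
    show (if q.1 k = 0 then x₀ else q.2 k) ∈ closure {y | f y ≠ ⊤}
    by_cases h : q.1 k = 0
    · rw [if_pos h]; exact subset_closure hx₀
    · rw [if_neg h]; exact hq3 k
  have hcP' : ∀ k, (c : EReal) ≤ f (p' k) := fun k => hc _ (subset_closure (hp' k))
  rw [aux_identity hbot c q.1 p hq1 hq2 hpdom hcP,
    aux_identity hbot c w' p' hw' hw1' hp' hcP']
  apply add_le_add_right
  rw [EReal.coe_ennreal_le_coe_ennreal_iff, hHp]
  exact hqmin (w', p') ⟨hw', hw1', fun k => subset_closure (hp' k), hx'⟩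
end
end
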